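/- Ought-implies-can (property D9) for the restricted canonical model: for every agent i ∈ Ag and every IRR-theory Γ, there exists an IRR-theory Δ such that R^dt_□ Γ Δ and for every IRR-theory Σ, if R^dt_[i] Δ Σ then R^dt_⊗i Γ Σ. -/

import Mathlib

/-! # Temporal Deontic STIT logic (TDS) — common definitions -/

/-- Formulas of the language L_TDS over a set `Ag` of agents, with propositional
variables indexed by `ℕ`. -/
inductive Formula (Ag : Type) : Type
  | var : ℕ → Formula Ag
  | neg : Formula Ag → Formula Ag
  | and : Formula Ag → Formula Ag → Formula Ag
  | box : Formula Ag → Formula Ag            -- □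
  | agent : Ag → Formula Ag → Formula Ag     -- [i]
  | coal : Formula Ag → Formula Ag           -- [Ag]
  | G : Formula Ag → Formula Ag
  | H : Formula Ag → Formula Ag
  | obl : Ag → Formula Ag → Formula Ag       -- ⊗_i

namespace Formula

variable {Ag : Type}

def impl (φ ψ : Formula Ag) : Formula Ag := neg (and φ (neg ψ))
def orf (φ ψ : Formula Ag) : Formula Ag := neg (and (neg φ) (neg ψ))
def diam (φ : Formula Ag) : Formula Ag := neg (box (neg φ))              -- ◇
def diamAg (i : Ag) (φ : Formula Ag) : Formula Ag := neg (agent i (neg φ)) -- ⟨i⟩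
def diamCoal (φ : Formula Ag) : Formula Ag := neg (coal (neg φ))         -- ⟨Ag⟩
def F (φ : Formula Ag) : Formula Ag := neg (G (neg φ))
def P (φ : Formula Ag) : Formula Ag := neg (H (neg φ))
def perm (i : Ag) (φ : Formula Ag) : Formula Ag := neg (obl i (neg φ))   -- ⊖_i
def bot : Formula Ag := and (var 0) (neg (var 0))
def verum : Formula Ag := neg bot

/-- name(p) := □¬p ∧ □(Gp ∧ Hp) -/
def nameF (p : ℕ) : Formula Ag :=
  and (box (neg (var p))) (box (and (G (var p)) (H (var p))))

/-- The propositional variable `p` occurs in the formula. -/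
def occurs (p : ℕ) : Formula Ag → Prop
  | var q => p = q
  | neg φ => occurs p φ
  | and φ ψ => occurs p φ ∨ occurs p ψ
  | box φ => occurs p φ
  | agent _ φ => occurs p φ
  | coal φ => occurs p φ
  | G φ => occurs p φ
  | H φ => occurs p φ
  | obl _ φ => occurs p φ

/-- Propositional (Boolean) evaluation of a formula, treating every formula whose
main connective is not `neg` or `and` as an atom valued by `v`. -/
def evalProp (v : Formula Ag → Bool) : Formula Ag → Bool
  | neg φ => ! evalProp v φ
  | and φ ψ => evalProp v φ && evalProp v ψ
  | φ => v φ

/-- φ is a propositional tautology. -/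
def Tautology (φ : Formula Ag) : Prop := ∀ v : Formula Ag → Bool, evalProp v φ = true

/-- Finite conjunction. -/
def bigAnd (l : List (Formula Ag)) : Formula Ag := l.foldr and verum

end Formula

/-- A fixed enumeration of the (finitely many) agents. -/
noncomputable def agList (Ag : Type) [Fintype Ag] : List Ag := Finset.univ.toList

open Formula in
/-- The Hilbert system TDS. -/
inductive Prv {Ag : Type} [Fintype Ag] : Formula Ag → Prop
  | taut {φ : Formula Ag} : Tautology φ → Prv φ
  -- S5 for □
  | kBox (φ ψ : Formula Ag) : Prv (impl (box (impl φ ψ)) (impl (box φ) (box ψ)))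
  | tBox (φ : Formula Ag) : Prv (impl (box φ) φ)
  | fiveBox (φ : Formula Ag) : Prv (impl (diam φ) (box (diam φ)))
  -- S5 for each [i]
  | kAg (i : Ag) (φ ψ : Formula Ag) :
      Prv (impl (agent i (impl φ ψ)) (impl (agent i φ) (agent i ψ)))
  | tAg (i : Ag) (φ : Formula Ag) : Prv (impl (agent i φ) φ)
  | fiveAg (i : Ag) (φ : Formula Ag) : Prv (impl (diamAg i φ) (agent i (diamAg i φ)))
  -- S5 for [Ag]
  | kCoal (φ ψ : Formula Ag) : Prv (impl (coal (impl φ ψ)) (impl (coal φ) (coal ψ)))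
  | tCoal (φ : Formula Ag) : Prv (impl (coal φ) φ)
  | fiveCoal (φ : Formula Ag) : Prv (impl (diamCoal φ) (coal (diamCoal φ)))
  -- A10 independence of agents
  | a10 (φs : Ag → Formula Ag) :
      Prv (impl (bigAnd ((agList Ag).map (fun i => diam (agent i (φs i)))))
                (diam (bigAnd ((agList Ag).map (fun i => agent i (φs i))))))
  -- A11
  | a11 (φs : Ag → Formula Ag) :
      Prv (impl (bigAnd ((agList Ag).map (fun i => agent i (φs i))))
                (coal (bigAnd ((agList Ag).map (fun i => φs i)))))
  -- A12 K for ⊗_i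
  | a12 (i : Ag) (φ ψ : Formula Ag) :
      Prv (impl (obl i (impl φ ψ)) (impl (obl i φ) (obl i ψ)))
  -- A13
  | a13 (i : Ag) (φ : Formula Ag) : Prv (impl (box φ) (and (agent i φ) (obl i φ)))
  -- A14
  | a14 (i : Ag) (φ : Formula Ag) : Prv (impl (obl i φ) (diam (agent i φ)))
  -- A15
  | a15 (i : Ag) (φ : Formula Ag) : Prv (impl (diam (obl i φ)) (box (obl i φ)))
  -- A16
  | a16 (i : Ag) (φ ψ : Formula Ag) :
      Prv (impl (box (impl (agent i φ) (agent i ψ))) (impl (obl i φ) (obl i ψ)))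
  -- KD4 for G
  | kG (φ ψ : Formula Ag) : Prv (impl (G (impl φ ψ)) (impl (G φ) (G ψ)))
  | fourG (φ : Formula Ag) : Prv (impl (G φ) (G (G φ)))
  | dG (φ : Formula Ag) : Prv (impl (G φ) (F φ))
  -- K for H
  | kH (φ ψ : Formula Ag) : Prv (impl (H (impl φ ψ)) (impl (H φ) (H ψ)))
  -- A21 - A25
  | a21 (φ : Formula Ag) : Prv (impl φ (G (P φ)))
  | a22 (φ : Formula Ag) : Prv (impl φ (H (F φ)))
  | a23 (φ : Formula Ag) : Prv (impl (F (P φ)) (orf (P φ) (orf φ (F φ))))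
  | a24 (φ : Formula Ag) : Prv (impl (P (F φ)) (orf (P φ) (orf φ (F φ))))
  | a25 (φ : Formula Ag) : Prv (impl (F (diam φ)) (diamCoal (F φ)))
  -- rules
  | mp {φ ψ : Formula Ag} : Prv (impl φ ψ) → Prv φ → Prv ψ
  | necBox {φ : Formula Ag} : Prv φ → Prv (box φ)
  | necG {φ : Formula Ag} : Prv φ → Prv (G φ)
  | necH {φ : Formula Ag} : Prv φ → Prv (H φ)
  | r2 {φ : Formula Ag} (p : ℕ) : ¬ occurs p φ → Prv (impl (nameF p) φ) → Prv φ

/-- Derivability from a set of premises (Def. 4.4 of Blackburn–de Rijke–Venema). -/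
def SetProv {Ag : Type} [Fintype Ag] (Γ : Set (Formula Ag)) (φ : Formula Ag) : Prop :=
  ∃ l : List (Formula Ag), (∀ ψ ∈ l, ψ ∈ Γ) ∧ Prv (l.foldr Formula.impl φ)

/-- Maximally consistent set. -/
def MCS {Ag : Type} [Fintype Ag] (Γ : Set (Formula Ag)) : Prop :=
  ¬ SetProv Γ Formula.bot ∧ ∀ Γ' : Set (Formula Ag), Γ ⊂ Γ' → SetProv Γ' Formula.bot

/-- The members of `Boxes`. -/
inductive BoxOp (Ag : Type) : Type
  | box : BoxOp Ag
  | coal : BoxOp Ag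
  | G : BoxOp Ag
  | H : BoxOp Ag
  | agent : Ag → BoxOp Ag
  | obl : Ag → BoxOp Ag

/-- Applying a box operator to a formula. -/
def BoxOp.apply {Ag : Type} : BoxOp Ag → Formula Ag → Formula Ag
  | .box, φ => .box φ
  | .coal, φ => .coal φ
  | .G, φ => .G φ
  | .H, φ => .H φ
  | .agent i, φ => .agent i φ
  | .obl i, φ => .obl i φ

/-- The dual diamond ⟨α⟩ of a box operator [α]. -/
def BoxOp.dual {Ag : Type} (α : BoxOp Ag) (φ : Formula Ag) : Formula Ag :=
  .neg (α.apply (.neg φ))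

/-- Canonical relation: R^dt_[α] Γ Δ iff {φ : [α]φ ∈ Γ} ⊆ Δ. -/
def canR {Ag : Type} (α : BoxOp Ag) (Γ Δ : Set (Formula Ag)) : Prop :=
  ∀ φ : Formula Ag, α.apply φ ∈ Γ → φ ∈ Δ

/-- Zig-zagging formula ⟨α₁⟩(φ₁ ∧ ⟨α₂⟩(φ₂ ∧ … ∧ ⟨αₙ⟩φₙ)…), where `l` lists the
outer pairs (αₖ, φₖ) for k < n and `(α, φ)` is the innermost pair (αₙ, φₙ). -/
def zigzag {Ag : Type} (l : List (BoxOp Ag × Formula Ag)) (α : BoxOp Ag)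
    (φ : Formula Ag) : Formula Ag :=
  l.foldr (fun p acc => p.1.dual (Formula.and p.2 acc)) (α.dual φ)

/-- IRR-theories. -/
def IRRTheory {Ag : Type} [Fintype Ag] (Γ : Set (Formula Ag)) : Prop :=
  MCS Γ ∧ (∃ p : ℕ, Formula.nameF p ∈ Γ) ∧
    ∀ (l : List (BoxOp Ag × Formula Ag)) (α : BoxOp Ag) (φ : Formula Ag),
      zigzag l α φ ∈ Γ → ∃ q : ℕ, zigzag l α (Formula.and φ (Formula.nameF q)) ∈ Γ

/-- Diamond saturated set of MCSs. -/
def DiamondSaturated {Ag : Type} (X : Set (Set (Formula Ag))) : Prop :=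
  ∀ Γ ∈ X, ∀ (α : BoxOp Ag) (φ : Formula Ag), α.dual φ ∈ Γ →
    ∃ Δ ∈ X, canR α Γ Δ ∧ φ ∈ Δ

/-- The relational frame conditions of a TDS-frame. -/
structure IsTDSFrame (Ag W : Type) (Rbox : W → W → Prop) (Rag : Ag → W → W → Prop)
    (Rcoal : W → W → Prop) (RG : W → W → Prop) (RH : W → W → Prop)
    (Robl : Ag → W → W → Prop) : Prop where
  nonempty : Nonempty W
  box_equiv : Equivalence Rbox
  ag_equiv : ∀ i : Ag, Equivalence (Rag i)
  coal_equiv : Equivalence Rcoal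
  c1 : ∀ (i : Ag) (w v : W), Rag i w v → Rbox w v
  c2 : ∀ u : Ag → W, (∀ i j : Ag, Rbox (u i) (u j)) → ∃ v : W, ∀ i : Ag, Rag i (u i) v
  c3 : ∀ w v : W, Rcoal w v → ∀ i : Ag, Rag i w v
  g_trans : ∀ w u v : W, RG w u → RG u v → RG w v
  g_serial : ∀ w : W, ∃ v : W, RG w v
  h_conv : ∀ w v : W, RH w v ↔ RG v w
  t4 : ∀ w u v : W, RG w u → RG w v → RG u v ∨ u = v ∨ RG v u
  t5 : ∀ w u v : W, RH w u → RH w v → RH u v ∨ u = v ∨ RH v u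
  t6 : ∀ w u v : W, RG w u → Rbox u v → ∃ z : W, Rcoal w z ∧ RG z v
  t7 : ∀ w u : W, Rbox w u → ¬ RG w u
  d8 : ∀ (i : Ag) (w v : W), Robl i w v → Rbox w v
  d9 : ∀ (i : Ag) (w : W), ∃ v : W, Rbox w v ∧ ∀ u : W, Rag i v u → Robl i w u
  d10 : ∀ (i : Ag) (w v u z : W), Rbox w v → Rbox w u → Robl i u z → Robl i v z
  d11 : ∀ (i : Ag) (w v : W), Robl i w v →
      ∃ u : W, Rbox w u ∧ Rag i u v ∧ ∀ z : W, Rag i u z → Robl i w z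

/-- The relational frame conditions of a TUS-frame (the non-deontic part of a
TDS-frame). -/
structure IsTUSFrame (Ag W : Type) (Rbox : W → W → Prop) (Rag : Ag → W → W → Prop)
    (Rcoal : W → W → Prop) (RG : W → W → Prop) (RH : W → W → Prop) : Prop where
  nonempty : Nonempty W
  box_equiv : Equivalence Rbox
  ag_equiv : ∀ i : Ag, Equivalence (Rag i)
  coal_equiv : Equivalence Rcoal
  c1 : ∀ (i : Ag) (w v : W), Rag i w v → Rbox w v
  c2 : ∀ u : Ag → W, (∀ i j : Ag, Rbox (u i) (u j)) → ∃ v : W, ∀ i : Ag, Rag i (u i) v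
  c3 : ∀ w v : W, Rcoal w v → ∀ i : Ag, Rag i w v
  g_trans : ∀ w u v : W, RG w u → RG u v → RG w v
  g_serial : ∀ w : W, ∃ v : W, RG w v
  h_conv : ∀ w v : W, RH w v ↔ RG v w
  t4 : ∀ w u v : W, RG w u → RG w v → RG u v ∨ u = v ∨ RG v u
  t5 : ∀ w u v : W, RH w u → RH w v → RH u v ∨ u = v ∨ RH v u
  t6 : ∀ w u v : W, RG w u → Rbox u v → ∃ z : W, Rcoal w z ∧ RG z v
  t7 : ∀ w u : W, Rbox w u → ¬ RG w u

/-- A (bare) relational Kripke model for the language L_TDS. -/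
structure KModel (Ag : Type) where
  W : Type
  Rbox : W → W → Prop
  Rag : Ag → W → W → Prop
  Rcoal : W → W → Prop
  RG : W → W → Prop
  RH : W → W → Prop
  Robl : Ag → W → W → Prop
  val : ℕ → W → Prop

/-- Standard Kripke satisfaction. -/
def KModel.sat {Ag : Type} (M : KModel Ag) : Formula Ag → M.W → Prop
  | .var p, w => M.val p w
  | .neg φ, w => ¬ M.sat φ w
  | .and φ ψ, w => M.sat φ w ∧ M.sat ψ w
  | .box φ, w => ∀ u : M.W, M.Rbox w u → M.sat φ u
  | .agent i φ, w => ∀ u : M.W, M.Rag i w u → M.sat φ u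
  | .coal φ, w => ∀ u : M.W, M.Rcoal w u → M.sat φ u
  | .G φ, w => ∀ u : M.W, M.RG w u → M.sat φ u
  | .H φ, w => ∀ u : M.W, M.RH w u → M.sat φ u
  | .obl i φ, w => ∀ u : M.W, M.Robl i w u → M.sat φ u

/-- A TDS-model: a Kripke model whose frame is a TDS-frame. -/
structure TDSModel (Ag : Type) extends KModel Ag where
  frame : IsTDSFrame Ag W Rbox Rag Rcoal RG RH Robl

/-- Satisfaction on TDS-models. -/
abbrev TDSModel.sat {Ag : Type} (M : TDSModel Ag) : Formula Ag → M.W → Prop :=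
  M.toKModel.sat

/-- The canonical model with domain restricted to a set `X` of theories. -/
def canonicalModel (Ag : Type) (X : Set (Set (Formula Ag))) : KModel Ag where
  W := X
  Rbox Γ Δ := canR BoxOp.box Γ.1 Δ.1
  Rag i Γ Δ := canR (BoxOp.agent i) Γ.1 Δ.1
  Rcoal Γ Δ := canR BoxOp.coal Γ.1 Δ.1
  RG Γ Δ := canR BoxOp.G Γ.1 Δ.1
  RH Γ Δ := canR BoxOp.H Γ.1 Δ.1
  Robl i Γ Δ := canR (BoxOp.obl i) Γ.1 Δ.1
  val p Γ := Formula.var p ∈ Γ.1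

/-- A temporal utilitarian STIT model (TUS-model). -/
structure TUSModel (Ag : Type) where
  W : Type
  Rbox : W → W → Prop
  Rag : Ag → W → W → Prop
  Rcoal : W → W → Prop
  RG : W → W → Prop
  RH : W → W → Prop
  util : W → ℕ
  val : ℕ → W → Prop
  frame : IsTUSFrame Ag W Rbox Rag Rcoal RG RH

namespace TUSModel

variable {Ag : Type}

/-- The moment R_□(w). -/
def mom (M : TUSModel Ag) (w : M.W) : Set M.W := {u | M.Rbox w u}

/-- The choice cell R_[i](v). -/
def cell (M : TUSModel Ag) (i : Ag) (v : M.W) : Set M.W := {u | M.Rag i v u}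

/-- The state R^s_[i](v) := ⋂_{k ≠ i} R_[k](v). -/
def state (M : TUSModel Ag) (i : Ag) (v : M.W) : Set M.W :=
  {u | ∀ k : Ag, k ≠ i → M.Rag k v u}

/-- Weak preference ≤ between sets of worlds. -/
def pref (M : TUSModel Ag) (A B : Set M.W) : Prop :=
  ∀ a ∈ A, ∀ b ∈ B, M.util a ≤ M.util b

/-- Weak dominance ⪯ between sets of worlds, relative to the moment of `w`:
for every state included in the moment R_□(w), the restriction of `A` is weakly
preferred to the restriction of `B`. -/
def dom (M : TUSModel Ag) (i : Ag) (w : M.W) (A B : Set M.W) : Prop :=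
  ∀ x : M.W, M.state i x ⊆ M.mom w → M.pref (A ∩ M.state i x) (B ∩ M.state i x)

/-- Strict dominance ≺. -/
def sdom (M : TUSModel Ag) (i : Ag) (w : M.W) (A B : Set M.W) : Prop :=
  M.dom i w A B ∧ ¬ M.dom i w B A

/-- Satisfaction on TUS-models, with the dominance-based clause for ⊗_i. -/
def sat (M : TUSModel Ag) : Formula Ag → M.W → Prop
  | .var p, w => M.val p w
  | .neg φ, w => ¬ M.sat φ w
  | .and φ ψ, w => M.sat φ w ∧ M.sat ψ w
  | .box φ, w => ∀ u : M.W, M.Rbox w u → M.sat φ u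
  | .agent i φ, w => ∀ u : M.W, M.Rag i w u → M.sat φ u
  | .coal φ, w => ∀ u : M.W, M.Rcoal w u → M.sat φ u
  | .G φ, w => ∀ u : M.W, M.RG w u → M.sat φ u
  | .H φ, w => ∀ u : M.W, M.RH w u → M.sat φ u
  | .obl i φ, w =>
      ∀ v : M.W, M.cell i v ⊆ M.mom w → ¬ (M.cell i v ⊆ {u : M.W | M.sat φ u}) →
        ∃ z : M.W, M.cell i z ⊆ M.mom w ∧
          M.sdom i w (M.cell i v) (M.cell i z) ∧
          M.cell i z ⊆ {u : M.W | M.sat φ u} ∧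
          ∀ x : M.W, M.cell i x ⊆ M.mom w →
            M.dom i w (M.cell i z) (M.cell i x) → M.cell i x ⊆ {u : M.W | M.sat φ u}

end TUSModel

/-- Replacing the deontic relations of a TDS-model by a utility function yields
a TUS-model over the same worlds, relations and valuation. -/
def TDSModel.toTUS {Ag : Type} (M : TDSModel Ag) (util : M.W → ℕ) : TUSModel Ag where
  W := M.W
  Rbox := M.Rbox
  Rag := M.Rag
  Rcoal := M.Rcoal
  RG := M.RG
  RH := M.RH
  util := util
  val := M.val
  frame :=
    { nonempty := M.frame.nonempty
      box_equiv := M.frame.box_equiv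
      ag_equiv := M.frame.ag_equiv
      coal_equiv := M.frame.coal_equiv
      c1 := M.frame.c1
      c2 := M.frame.c2
      c3 := M.frame.c3
      g_trans := M.frame.g_trans
      g_serial := M.frame.g_serial
      h_conv := M.frame.h_conv
      t4 := M.frame.t4
      t5 := M.frame.t5
      t6 := M.frame.t6
      t7 := M.frame.t7 }


/-! ### Auxiliary development for `canonical_D9` -/

namespace TDSAux

open Formula

variable {Ag : Type}

section Taut
variable (a b c x θ χ ψ : Formula Ag)

theorem t_id : Tautology (impl a a) := by
  intro v
  simp only [Formula.impl, Formula.orf, Formula.verum, Formula.bot, Formula.evalProp]; cases (evalProp v a) <;> rfl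

theorem t_k : Tautology (impl b (impl a b)) := by
  intro v
  simp only [Formula.impl, Formula.orf, Formula.verum, Formula.bot, Formula.evalProp]; cases (evalProp v a) <;> cases (evalProp v b) <;> rfl

theorem t_comp : Tautology (impl (impl a b) (impl (impl b c) (impl a c))) := by
  intro v
  simp only [Formula.impl, Formula.orf, Formula.verum, Formula.bot, Formula.evalProp]
  cases (evalProp v a) <;> cases (evalProp v b) <;> cases (evalProp v c) <;> rfl

theorem t_and_left : Tautology (impl (Formula.and a b) a) := by
  intro v
  simp only [Formula.impl, Formula.orf, Formula.verum, Formula.bot, Formula.evalProp]; cases (evalProp v a) <;> cases (evalProp v b) <;> rfl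

theorem t_and_right : Tautology (impl (Formula.and a b) b) := by
  intro v
  simp only [Formula.impl, Formula.orf, Formula.verum, Formula.bot, Formula.evalProp]; cases (evalProp v a) <;> cases (evalProp v b) <;> rfl

theorem t_and_intro : Tautology (impl a (impl b (Formula.and a b))) := by
  intro v
  simp only [Formula.impl, Formula.orf, Formula.verum, Formula.bot, Formula.evalProp]; cases (evalProp v a) <;> cases (evalProp v b) <;> rfl

theorem t_s : Tautology (impl (impl x (impl a b)) (impl (impl x a) (impl x b))) := by
  intro v
  simp only [Formula.impl, Formula.orf, Formula.verum, Formula.bot, Formula.evalProp]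
  cases (evalProp v x) <;> cases (evalProp v a) <;> cases (evalProp v b) <;> rfl

theorem t_swap : Tautology (impl (impl a (impl b c)) (impl b (impl a c))) := by
  intro v
  simp only [Formula.impl, Formula.orf, Formula.verum, Formula.bot, Formula.evalProp]
  cases (evalProp v a) <;> cases (evalProp v b) <;> cases (evalProp v c) <;> rfl

theorem t_curry : Tautology (impl (impl (Formula.and a b) c) (impl a (impl b c))) := by
  intro v
  simp only [Formula.impl, Formula.orf, Formula.verum, Formula.bot, Formula.evalProp]
  cases (evalProp v a) <;> cases (evalProp v b) <;> cases (evalProp v c) <;> rfl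

theorem t_uncurry : Tautology (impl (impl a (impl b c)) (impl (Formula.and a b) c)) := by
  intro v
  simp only [Formula.impl, Formula.orf, Formula.verum, Formula.bot, Formula.evalProp]
  cases (evalProp v a) <;> cases (evalProp v b) <;> cases (evalProp v c) <;> rfl

theorem t_dne : Tautology (impl (neg (neg a)) a) := by
  intro v
  simp only [Formula.impl, Formula.orf, Formula.verum, Formula.bot, Formula.evalProp]; cases (evalProp v a) <;> rfl

theorem t_dni : Tautology (impl a (neg (neg a))) := by
  intro v
  simp only [Formula.impl, Formula.orf, Formula.verum, Formula.bot, Formula.evalProp]; cases (evalProp v a) <;> rfl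

theorem t_contra : Tautology (impl (impl a b) (impl (neg b) (neg a))) := by
  intro v
  simp only [Formula.impl, Formula.orf, Formula.verum, Formula.bot, Formula.evalProp]; cases (evalProp v a) <;> cases (evalProp v b) <;> rfl

theorem t_contra2 : Tautology (impl (impl a (neg b)) (impl b (neg a))) := by
  intro v
  simp only [Formula.impl, Formula.orf, Formula.verum, Formula.bot, Formula.evalProp]; cases (evalProp v a) <;> cases (evalProp v b) <;> rfl

theorem t_l1 : Tautology (impl (neg (Formula.and θ χ))
    (impl (neg (Formula.and θ (neg χ))) (neg θ))) := by
  intro v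
  simp only [Formula.impl, Formula.orf, Formula.verum, Formula.bot, Formula.evalProp]; cases (evalProp v θ) <;> cases (evalProp v χ) <;> rfl

theorem t_f4 : Tautology (impl ψ (impl (neg (Formula.and θ ψ)) (neg θ))) := by
  intro v
  simp only [Formula.impl, Formula.orf, Formula.verum, Formula.bot, Formula.evalProp]; cases (evalProp v θ) <;> cases (evalProp v ψ) <;> rfl

theorem t_bot : Tautology (impl a (impl (neg a) Formula.bot)) := by
  intro v
  simp only [Formula.impl, Formula.orf, Formula.verum, Formula.bot, Formula.evalProp]; cases (evalProp v a) <;> cases (v (Formula.var 0)) <;> rfl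

theorem t_bot2 : Tautology (impl (impl a Formula.bot)
    (impl (impl (neg a) Formula.bot) Formula.bot)) := by
  intro v
  simp only [Formula.impl, Formula.orf, Formula.verum, Formula.bot, Formula.evalProp]; cases (evalProp v a) <;> cases (v (Formula.var 0)) <;> rfl

theorem t_notof : Tautology (impl (impl a Formula.bot) (neg a)) := by
  intro v
  simp only [Formula.impl, Formula.orf, Formula.verum, Formula.bot, Formula.evalProp]; cases (evalProp v a) <;> cases (v (Formula.var 0)) <;> rfl

theorem t_verum : Tautology (Formula.verum (Ag := Ag)) := by
  intro v
  simp only [Formula.impl, Formula.orf, Formula.verum, Formula.bot, Formula.evalProp]; cases (v (Formula.var 0)) <;> rfl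

theorem t_pair : Tautology (impl (impl x a) (impl (impl x b) (impl x (Formula.and a b)))) := by
  intro v
  simp only [Formula.impl, Formula.orf, Formula.verum, Formula.bot, Formula.evalProp]
  cases (evalProp v x) <;> cases (evalProp v a) <;> cases (evalProp v b) <;> rfl

theorem t_assoc1 : Tautology (impl (Formula.and x (Formula.and a b))
    (Formula.and (Formula.and x a) b)) := by
  intro v
  simp only [Formula.impl, Formula.orf, Formula.verum, Formula.bot, Formula.evalProp]
  cases (evalProp v x) <;> cases (evalProp v a) <;> cases (evalProp v b) <;> rfl

theorem t_assoc2 : Tautology (impl (Formula.and (Formula.and x a) b)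
    (Formula.and x (Formula.and a b))) := by
  intro v
  simp only [Formula.impl, Formula.orf, Formula.verum, Formula.bot, Formula.evalProp]
  cases (evalProp v x) <;> cases (evalProp v a) <;> cases (evalProp v b) <;> rfl

theorem t_xverum : Tautology (impl x (Formula.and x Formula.verum)) := by
  intro v
  simp only [Formula.impl, Formula.orf, Formula.verum, Formula.bot, Formula.evalProp]; cases (evalProp v x) <;> cases (v (Formula.var 0)) <;> rfl

theorem t_verumx : Tautology (impl x (Formula.and Formula.verum x)) := by
  intro v
  simp only [Formula.impl, Formula.orf, Formula.verum, Formula.bot, Formula.evalProp]; cases (evalProp v x) <;> cases (v (Formula.var 0)) <;> rfl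

end Taut

section Rules
variable [Fintype Ag] {a b c x θ χ ψ : Formula Ag}

theorem imp_trans (h1 : Prv (impl a b)) (h2 : Prv (impl b c)) : Prv (impl a c) :=
  Prv.mp (Prv.mp (Prv.taut (t_comp a b c)) h1) h2

theorem prv_and_left (h : Prv (Formula.and a b)) : Prv a :=
  Prv.mp (Prv.taut (t_and_left a b)) h

theorem prv_and_right (h : Prv (Formula.and a b)) : Prv b :=
  Prv.mp (Prv.taut (t_and_right a b)) h

theorem prv_verum : Prv (Formula.verum (Ag := Ag)) := Prv.taut t_verum

theorem mono_box (h : Prv (impl a b)) : Prv (impl (Formula.box a) (Formula.box b)) :=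
  Prv.mp (Prv.kBox a b) (Prv.necBox h)

theorem nec_agent (i : Ag) (h : Prv a) : Prv (Formula.agent i a) :=
  prv_and_left (Prv.mp (Prv.a13 i a) (Prv.necBox h))

theorem nec_obl (i : Ag) (h : Prv a) : Prv (Formula.obl i a) :=
  prv_and_right (Prv.mp (Prv.a13 i a) (Prv.necBox h))

theorem mono_agent (i : Ag) (h : Prv (impl a b)) :
    Prv (impl (Formula.agent i a) (Formula.agent i b)) :=
  Prv.mp (Prv.kAg i a b) (nec_agent i h)

theorem mono_obl (i : Ag) (h : Prv (impl a b)) :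
    Prv (impl (Formula.obl i a) (Formula.obl i b)) :=
  Prv.mp (Prv.a12 i a b) (nec_obl i h)

theorem obl_and (i : Ag) :
    Prv (impl (Formula.obl i a) (impl (Formula.obl i b) (Formula.obl i (Formula.and a b)))) :=
  imp_trans (Prv.mp (Prv.a12 i a (impl b (Formula.and a b)))
      (nec_obl i (Prv.taut (t_and_intro a b))))
    (Prv.a12 i b (Formula.and a b))

end Rules

end TDSAux

namespace TDSAux
open Formula
variable {Ag : Type}

section S5
variable [Fintype Ag] (op : Formula Ag → Formula Ag)

def S5K : Prop := ∀ a b : Formula Ag, Prv (impl (op (impl a b)) (impl (op a) (op b)))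
def S5T : Prop := ∀ a : Formula Ag, Prv (impl (op a) a)
def S5Five : Prop := ∀ a : Formula Ag, Prv (impl (neg (op (neg a))) (op (neg (op (neg a)))))
def S5Nec : Prop := ∀ a : Formula Ag, Prv a → Prv (op a)

theorem s5_mono (hK : S5K op) (hnec : S5Nec op) {a b : Formula Ag} (h : Prv (impl a b)) :
    Prv (impl (op a) (op b)) :=
  Prv.mp (hK a b) (hnec _ h)

theorem s5_lemA (hK : S5K op) (h5 : S5Five op) (hnec : S5Nec op) (a : Formula Ag) :
    Prv (impl (neg (op (neg (op a)))) (op a)) := by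
  have st2 : Prv (impl (neg (op (neg (neg a)))) (neg (op a))) :=
    Prv.mp (Prv.taut (t_contra (op a) (op (neg (neg a)))))
      (s5_mono op hK hnec (Prv.taut (t_dni a)))
  have st4 : Prv (impl (neg (op (neg (neg a)))) (op (neg (op a)))) :=
    imp_trans (h5 (neg a)) (s5_mono op hK hnec st2)
  have st5 : Prv (impl (neg (op (neg (op a)))) (neg (neg (op (neg (neg a)))))) :=
    Prv.mp (Prv.taut (t_contra (neg (op (neg (neg a)))) (op (neg (op a))))) st4
  exact imp_trans st5 (imp_trans (Prv.taut (t_dne (op (neg (neg a)))))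
    (s5_mono op hK hnec (Prv.taut (t_dne a))))

theorem s5_tdual (hT : S5T op) (a : Formula Ag) : Prv (impl a (neg (op (neg a)))) :=
  Prv.mp (Prv.taut (t_contra2 (op (neg a)) a)) (hT (neg a))

theorem s5_four (hK : S5K op) (hT : S5T op) (h5 : S5Five op) (hnec : S5Nec op)
    (a : Formula Ag) : Prv (impl (op a) (op (op a))) :=
  imp_trans (imp_trans (s5_tdual op hT (op a)) (h5 (op a)))
    (s5_mono op hK hnec (s5_lemA op hK h5 hnec a))

end S5

section ModalDerived
variable [Fintype Ag]

theorem box_four (a : Formula Ag) : Prv (impl (Formula.box a) (Formula.box (Formula.box a))) :=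
  s5_four Formula.box Prv.kBox Prv.tBox (fun a => Prv.fiveBox a) (fun _ h => Prv.necBox h) a

theorem agent_four (i : Ag) (a : Formula Ag) :
    Prv (impl (Formula.agent i a) (Formula.agent i (Formula.agent i a))) :=
  s5_four (Formula.agent i) (Prv.kAg i) (Prv.tAg i) (fun a => Prv.fiveAg i a)
    (fun _ h => nec_agent i h) a

theorem box_and_box {x y : Formula Ag} :
    Prv (impl (Formula.and (Formula.box x) (Formula.box y)) (Formula.box (Formula.and x y))) := by
  have g2 : Prv (impl (Formula.box x) (Formula.box (impl y (Formula.and x y)))) :=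
    mono_box (Prv.taut (t_and_intro x y))
  have g4 : Prv (impl (Formula.box x) (impl (Formula.box y) (Formula.box (Formula.and x y)))) :=
    imp_trans g2 (Prv.kBox y (Formula.and x y))
  exact Prv.mp (Prv.taut (t_uncurry (Formula.box x) (Formula.box y)
    (Formula.box (Formula.and x y)))) g4

/-- Names are `□`-stable. -/
theorem name_box (p : ℕ) :
    Prv (impl (Formula.nameF (Ag := Ag) p) (Formula.box (Formula.nameF p))) := by
  set A : Formula Ag := Formula.neg (Formula.var p) with hA
  set B : Formula Ag := Formula.and (Formula.G (Formula.var p)) (Formula.H (Formula.var p)) with hB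
  have c1 : Prv (impl (Formula.nameF (Ag := Ag) p) (Formula.box (Formula.box A))) :=
    imp_trans (Prv.taut (t_and_left (Formula.box A) (Formula.box B))) (box_four A)
  have c2 : Prv (impl (Formula.nameF (Ag := Ag) p) (Formula.box (Formula.box B))) :=
    imp_trans (Prv.taut (t_and_right (Formula.box A) (Formula.box B))) (box_four B)
  have pr : Prv (impl (Formula.nameF (Ag := Ag) p)
      (Formula.and (Formula.box (Formula.box A)) (Formula.box (Formula.box B)))) :=
    Prv.mp (Prv.mp (Prv.taut (t_pair (Formula.box (Formula.box A))
      (Formula.box (Formula.box B)) (Formula.nameF p))) c1) c2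
  exact imp_trans pr box_and_box

/-- `⊢ ⊗ᵢξ → ⊗ᵢ[i]ξ`. -/
theorem obl_to_obl_agent (i : Ag) (ξ : Formula Ag) :
    Prv (impl (Formula.obl i ξ) (Formula.obl i (Formula.agent i ξ))) :=
  Prv.mp (Prv.a16 i ξ (Formula.agent i ξ)) (Prv.necBox (agent_four i ξ))

/-- `⊢ ⊖ᵢ⊤`. -/
theorem prv_dd_verum (i : Ag) :
    Prv (Formula.neg (Formula.obl i (Formula.neg (Formula.verum (Ag := Ag))))) := by
  have h1 : Prv (impl (Formula.agent i (Formula.neg (Formula.verum (Ag := Ag)))) Formula.bot) :=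
    imp_trans (Prv.tAg i (Formula.neg Formula.verum)) (Prv.taut (t_dne Formula.bot))
  have h2 : Prv (Formula.neg (Formula.agent i (Formula.neg (Formula.verum (Ag := Ag))))) :=
    Prv.mp (Prv.taut (t_notof (Formula.agent i (Formula.neg Formula.verum)))) h1
  have h3 : Prv (Formula.box (Formula.neg (Formula.agent i
      (Formula.neg (Formula.verum (Ag := Ag)))))) := Prv.necBox h2
  have h4 : Prv (Formula.neg (Formula.diam (Formula.agent i
      (Formula.neg (Formula.verum (Ag := Ag)))))) :=
    Prv.mp (Prv.taut (t_dni (Formula.box (Formula.neg (Formula.agent i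
      (Formula.neg Formula.verum)))))) h3
  have h5 : Prv (impl (Formula.obl i (Formula.neg (Formula.verum (Ag := Ag))))
      (Formula.diam (Formula.agent i (Formula.neg Formula.verum)))) :=
    Prv.a14 i (Formula.neg Formula.verum)
  exact Prv.mp (Prv.mp (Prv.taut (t_contra (Formula.obl i (Formula.neg
    (Formula.verum (Ag := Ag)))) (Formula.diam (Formula.agent i (Formula.neg Formula.verum)))))
    h5) h4
end ModalDerived

end TDSAux

namespace TDSAux
open Formula
variable {Ag : Type} [Fintype Ag]

section Fold
variable {a b c x ψ : Formula Ag} {l : List (Formula Ag)}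

omit [Fintype Ag] in
theorem bigAnd_cons (a : Formula Ag) (l : List (Formula Ag)) :
    bigAnd (a :: l) = Formula.and a (bigAnd l) := rfl

theorem bigAnd_proj {χ : Formula Ag} : ∀ {l : List (Formula Ag)}, χ ∈ l →
    Prv (impl (bigAnd l) χ)
  | a :: l, h => by
    rcases List.mem_cons.1 h with h | h
    · subst h; exact Prv.taut (t_and_left χ (bigAnd l))
    · exact imp_trans (Prv.taut (t_and_right a (bigAnd l))) (bigAnd_proj h)

theorem bigAnd_intro {X : Formula Ag} : ∀ {l : List (Formula Ag)},
    (∀ χ ∈ l, Prv (impl X χ)) → Prv (impl X (bigAnd l))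
  | [], _ => Prv.mp (Prv.taut (t_k X Formula.verum)) prv_verum
  | a :: l, h => by
    have h1 : Prv (impl X a) := h a (List.mem_cons_self (a := a) (l := l))
    have h2 : Prv (impl X (bigAnd l)) := bigAnd_intro (fun χ hχ => h χ (List.mem_cons_of_mem a hχ))
    exact Prv.mp (Prv.mp (Prv.taut (t_pair a (bigAnd l) X)) h1) h2

theorem toBig : ∀ {l : List (Formula Ag)} {X ψ : Formula Ag},
    Prv (impl X (List.foldr impl ψ l)) → Prv (impl (Formula.and X (bigAnd l)) ψ)
  | [], X, ψ, h => imp_trans (Prv.taut (t_and_left X (bigAnd []))) h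
  | c :: l, X, ψ, h => by
    have h1 : Prv (impl (Formula.and X c) (List.foldr impl ψ l)) :=
      Prv.mp (Prv.taut (t_uncurry X c (List.foldr impl ψ l))) h
    exact imp_trans (Prv.taut (t_assoc1 c (bigAnd l) X)) (toBig h1)

theorem fromBig : ∀ {l : List (Formula Ag)} {X ψ : Formula Ag},
    Prv (impl (Formula.and X (bigAnd l)) ψ) → Prv (impl X (List.foldr impl ψ l))
  | [], X, ψ, h => imp_trans (Prv.taut (t_xverum X)) h
  | c :: l, X, ψ, h => by
    have h1 : Prv (impl (Formula.and (Formula.and X c) (bigAnd l)) ψ) :=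
      imp_trans (Prv.taut (t_assoc2 c (bigAnd l) X)) h
    exact Prv.mp (Prv.taut (t_curry X c (List.foldr impl ψ l))) (fromBig h1)

theorem fold_iff_bigAnd {l : List (Formula Ag)} {ψ : Formula Ag} :
    Prv (List.foldr impl ψ l) ↔ Prv (impl (bigAnd l) ψ) := by
  constructor
  · intro h
    have h1 : Prv (impl Formula.verum (List.foldr impl ψ l)) :=
      Prv.mp (Prv.taut (t_k Formula.verum (List.foldr impl ψ l))) h
    exact imp_trans (Prv.taut (t_verumx (bigAnd l))) (toBig h1)
  · intro h
    have h1 : Prv (impl (Formula.and Formula.verum (bigAnd l)) ψ) :=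
      imp_trans (Prv.taut (t_and_right Formula.verum (bigAnd l))) h
    exact Prv.mp (fromBig h1) prv_verum

theorem setProv_iff {Γ : Set (Formula Ag)} {ψ : Formula Ag} :
    SetProv Γ ψ ↔ ∃ l : List (Formula Ag), (∀ χ ∈ l, χ ∈ Γ) ∧ Prv (impl (bigAnd l) ψ) := by
  constructor
  · rintro ⟨l, hl, hp⟩; exact ⟨l, hl, fold_iff_bigAnd.1 hp⟩
  · rintro ⟨l, hl, hp⟩; exact ⟨l, hl, fold_iff_bigAnd.2 hp⟩

theorem setProv_of_prv {Γ : Set (Formula Ag)} {ψ : Formula Ag} (h : Prv ψ) : SetProv Γ ψ :=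
  ⟨[], by simp, h⟩

theorem setProv_of_mem {Γ : Set (Formula Ag)} {ψ : Formula Ag} (h : ψ ∈ Γ) : SetProv Γ ψ :=
  ⟨[ψ], by simpa using h, Prv.taut (t_id ψ)⟩

theorem setProv_mp {Γ : Set (Formula Ag)} {a b : Formula Ag}
    (h1 : SetProv Γ (impl a b)) (h2 : SetProv Γ a) : SetProv Γ b := by
  rw [setProv_iff] at h1 h2 ⊢
  obtain ⟨l1, hm1, hp1⟩ := h1
  obtain ⟨l2, hm2, hp2⟩ := h2
  refine ⟨l1 ++ l2, ?_, ?_⟩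
  · intro χ hχ; rcases List.mem_append.1 hχ with h | h
    · exact hm1 χ h
    · exact hm2 χ h
  · have e1 : Prv (impl (bigAnd (l1 ++ l2)) (bigAnd l1)) :=
      bigAnd_intro (fun χ hχ => bigAnd_proj (List.mem_append_left l2 hχ))
    have e2 : Prv (impl (bigAnd (l1 ++ l2)) (bigAnd l2)) :=
      bigAnd_intro (fun χ hχ => bigAnd_proj (List.mem_append_right l1 hχ))
    exact Prv.mp (Prv.mp (Prv.taut (t_s a b (bigAnd (l1 ++ l2))))
      (imp_trans e1 hp1)) (imp_trans e2 hp2)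

/-- Deduction theorem. -/
theorem deduction {Γ : Set (Formula Ag)} {φ ψ : Formula Ag}
    (h : SetProv (insert φ Γ) ψ) : SetProv Γ (impl φ ψ) := by
  classical
  rw [setProv_iff] at h ⊢
  obtain ⟨l, hm, hp⟩ := h
  refine ⟨l.filter (fun χ => χ ≠ φ), ?_, ?_⟩
  · intro χ hχ
    have := List.mem_filter.1 hχ
    rcases hm χ this.1 with h | h
    · exact absurd (by simpa using this.2) (by simp [h])
    · exact h
  · have hcl : Prv (impl (Formula.and φ (bigAnd (l.filter (fun χ => χ ≠ φ)))) (bigAnd l)) := by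
      refine bigAnd_intro (fun χ hχ => ?_)
      by_cases he : χ = φ
      · subst he
        exact Prv.taut (t_and_left χ (bigAnd (l.filter (fun x => x ≠ χ))))
      · exact imp_trans (Prv.taut (t_and_right φ (bigAnd (l.filter (fun x => x ≠ φ)))))
          (bigAnd_proj (List.mem_filter.2 ⟨hχ, by simpa using he⟩))
    have h2 : Prv (impl (Formula.and φ (bigAnd (l.filter (fun χ => χ ≠ φ)))) ψ) :=
      imp_trans hcl hp
    have h3 : Prv (impl φ (impl (bigAnd (l.filter (fun χ => χ ≠ φ))) ψ)) :=
      Prv.mp (Prv.taut (t_curry φ (bigAnd (l.filter (fun χ => χ ≠ φ))) ψ)) h2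
    exact Prv.mp (Prv.taut (t_swap φ (bigAnd (l.filter (fun χ => χ ≠ φ))) ψ)) h3

end Fold

section MCSFacts
variable {Γ : Set (Formula Ag)}

theorem mcs_mem_of_setprov (hm : MCS Γ) {φ : Formula Ag} (h : SetProv Γ φ) : φ ∈ Γ := by
  by_contra hn
  have h1 : SetProv (insert φ Γ) Formula.bot := hm.2 _ (Set.ssubset_insert hn)
  have h2 : SetProv Γ (impl φ Formula.bot) := deduction h1
  exact hm.1 (setProv_mp h2 h)

theorem mcs_mem_of_prv (hm : MCS Γ) {φ : Formula Ag} (h : Prv φ) : φ ∈ Γ :=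
  mcs_mem_of_setprov hm (setProv_of_prv h)

theorem mcs_mp_prv (hm : MCS Γ) {a b : Formula Ag} (h1 : Prv (impl a b)) (h2 : a ∈ Γ) : b ∈ Γ :=
  mcs_mem_of_setprov hm (setProv_mp (setProv_of_prv h1) (setProv_of_mem h2))

theorem mcs_not_both (hm : MCS Γ) {a : Formula Ag} (h1 : a ∈ Γ) (h2 : Formula.neg a ∈ Γ) : False :=
  hm.1 (setProv_mp (setProv_mp (setProv_of_prv (Prv.taut (t_bot a)))
    (setProv_of_mem h1)) (setProv_of_mem h2))

theorem mcs_neg_of_not_mem (hm : MCS Γ) {a : Formula Ag} (h : a ∉ Γ) : Formula.neg a ∈ Γ := by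
  by_contra hn
  have h1 : SetProv Γ (impl a Formula.bot) := deduction (hm.2 _ (Set.ssubset_insert h))
  have h2 : SetProv Γ (impl (Formula.neg a) Formula.bot) :=
    deduction (hm.2 _ (Set.ssubset_insert hn))
  exact hm.1 (setProv_mp (setProv_mp (setProv_of_prv (Prv.taut (t_bot2 a))) h1) h2)

theorem mcs_mem_of_not_neg (hm : MCS Γ) {a : Formula Ag} (h : Formula.neg a ∉ Γ) : a ∈ Γ := by
  by_contra hn
  exact h (mcs_neg_of_not_mem hm hn)

end MCSFacts

end TDSAux

namespace TDSAux
open Formula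

section Count
variable {Ag : Type}

private def encF (g : Ag → ℕ) : Formula Ag → ℕ
  | .var n => Nat.pair 0 n
  | .neg φ => Nat.pair 1 (encF g φ)
  | .and φ ψ => Nat.pair 2 (Nat.pair (encF g φ) (encF g ψ))
  | .box φ => Nat.pair 3 (encF g φ)
  | .agent i φ => Nat.pair 4 (Nat.pair (g i) (encF g φ))
  | .coal φ => Nat.pair 5 (encF g φ)
  | .G φ => Nat.pair 6 (encF g φ)
  | .H φ => Nat.pair 7 (encF g φ)
  | .obl i φ => Nat.pair 8 (Nat.pair (g i) (encF g φ))

private theorem encF_inj (g : Ag → ℕ) (hg : Function.Injective g) :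
    Function.Injective (encF g) := by
  intro φ ψ h
  induction φ generalizing ψ <;> cases ψ <;>
    simp_all [encF, Nat.pair_eq_pair] <;> aesop

instance countable_formula [Countable Ag] : Countable (Formula Ag) := by
  obtain ⟨g, hg⟩ := exists_injective_nat Ag
  exact (encF_inj g hg).countable

private def encB (g : Ag → ℕ) : BoxOp Ag → ℕ
  | .box => Nat.pair 0 0
  | .coal => Nat.pair 1 0
  | .G => Nat.pair 2 0
  | .H => Nat.pair 3 0
  | .agent i => Nat.pair 4 (g i)
  | .obl i => Nat.pair 5 (g i)

private theorem encB_inj (g : Ag → ℕ) (hg : Function.Injective g) :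
    Function.Injective (encB g) := by
  intro α β h
  cases α <;> cases β <;> simp_all [encB, Nat.pair_eq_pair] <;> aesop

instance countable_boxop [Countable Ag] : Countable (BoxOp Ag) := by
  obtain ⟨g, hg⟩ := exists_injective_nat Ag
  exact (encB_inj g hg).countable

end Count

end TDSAux

namespace TDSAux
open Formula

section Construction
set_option linter.unusedSectionVars false
attribute [local instance] Classical.propDecidable
variable {Ag : Type} [Fintype Ag]

/-- Additional conjunctive tautology forms. -/
theorem t_l1' (θ χ : Formula Ag) : Tautology (impl
    (Formula.and (neg (Formula.and θ χ)) (neg (Formula.and θ (neg χ)))) (neg θ)) := by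
  intro v
  simp only [Formula.impl, Formula.evalProp]
  cases (evalProp v θ) <;> cases (evalProp v χ) <;> rfl

theorem t_f4' (θ ψ : Formula Ag) : Tautology (impl
    (Formula.and ψ (neg (Formula.and θ ψ))) (neg θ)) := by
  intro v
  simp only [Formula.impl, Formula.evalProp]
  cases (evalProp v θ) <;> cases (evalProp v ψ) <;> rfl

/-- `⊖ᵢ` as an operation on formulas. -/
def dd (i : Ag) (θ : Formula Ag) : Formula Ag := (BoxOp.obl i).dual θ

theorem dd_def (i : Ag) (θ : Formula Ag) :
    dd i θ = Formula.neg (Formula.obl i (Formula.neg θ)) := rfl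

variable (i : Ag) (Γ : Set (Formula Ag))

theorem obl_pair (hm : MCS Γ) {a b : Formula Ag}
    (h1 : Formula.obl i a ∈ Γ) (h2 : Formula.obl i b ∈ Γ) :
    Formula.obl i (Formula.and a b) ∈ Γ :=
  mcs_mem_of_setprov hm (setProv_mp (setProv_mp (setProv_of_prv (obl_and i))
    (setProv_of_mem h1)) (setProv_of_mem h2))

theorem L1 (hm : MCS Γ) {θ χ : Formula Ag} (hθ : dd i θ ∈ Γ)
    (h : dd i (Formula.and θ χ) ∉ Γ) : dd i (Formula.and θ (Formula.neg χ)) ∈ Γ := by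
  by_contra h2
  have o1 : Formula.obl i (Formula.neg (Formula.and θ χ)) ∈ Γ := mcs_mem_of_not_neg hm h
  have o2 : Formula.obl i (Formula.neg (Formula.and θ (Formula.neg χ))) ∈ Γ :=
    mcs_mem_of_not_neg hm h2
  have o4 : Formula.obl i (Formula.neg θ) ∈ Γ :=
    mcs_mp_prv hm (mono_obl i (Prv.taut (t_l1' θ χ))) (obl_pair i Γ hm o1 o2)
  exact mcs_not_both hm o4 hθ

theorem L_forced (hm : MCS Γ) {θ ψ : Formula Ag} (hθ : dd i θ ∈ Γ)
    (hψ : Formula.obl i ψ ∈ Γ) : dd i (Formula.and θ ψ) ∈ Γ := by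
  by_contra h
  have o1 : Formula.obl i (Formula.neg (Formula.and θ ψ)) ∈ Γ := mcs_mem_of_not_neg hm h
  have o4 : Formula.obl i (Formula.neg θ) ∈ Γ :=
    mcs_mp_prv hm (mono_obl i (Prv.taut (t_f4' θ ψ))) (obl_pair i Γ hm hψ o1)
  exact mcs_not_both hm o4 hθ

/-- Abbreviation for the zig-zag witnessing property of an IRR theory. -/
def ZZ : Prop := ∀ (l : List (BoxOp Ag × Formula Ag)) (α : BoxOp Ag) (φ : Formula Ag),
    zigzag l α φ ∈ Γ → ∃ q : ℕ, zigzag l α (Formula.and φ (Formula.nameF q)) ∈ Γ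

noncomputable def decide1 (hm : MCS Γ) (e : Formula Ag)
    (θh : {θ : Formula Ag // dd i θ ∈ Γ}) : {θ : Formula Ag // dd i θ ∈ Γ} :=
  if h : dd i (Formula.and θh.1 e) ∈ Γ then ⟨Formula.and θh.1 e, h⟩
  else ⟨Formula.and θh.1 (Formula.neg e), L1 i Γ hm θh.2 h⟩

noncomputable def decide2 (hm : MCS Γ) (hz : ZZ Γ)
    (t : List (BoxOp Ag × Formula Ag) × BoxOp Ag × Formula Ag)
    (θh : {θ : Formula Ag // dd i θ ∈ Γ}) : {θ : Formula Ag // dd i θ ∈ Γ} :=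
  if h : dd i (Formula.and θh.1 (zigzag t.1 t.2.1 t.2.2)) ∈ Γ then
    ⟨Formula.and θh.1 (zigzag t.1 t.2.1 (Formula.and t.2.2 (Formula.nameF
        (Classical.choose (hz ((BoxOp.obl i, θh.1) :: t.1) t.2.1 t.2.2 h))))),
      Classical.choose_spec (hz ((BoxOp.obl i, θh.1) :: t.1) t.2.1 t.2.2 h)⟩
  else ⟨Formula.and θh.1 (Formula.neg (zigzag t.1 t.2.1 t.2.2)), L1 i Γ hm θh.2 h⟩

noncomputable def stageF (hm : MCS Γ) (hz : ZZ Γ) (h0 : dd i Formula.verum ∈ Γ)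
    (e1 : ℕ → Formula Ag) (e2 : ℕ → List (BoxOp Ag × Formula Ag) × BoxOp Ag × Formula Ag) :
    ℕ → {θ : Formula Ag // dd i θ ∈ Γ}
  | 0 => ⟨Formula.verum, h0⟩
  | n + 1 => decide2 i Γ hm hz (e2 n) (decide1 i Γ hm (e1 n) (stageF hm hz h0 e1 e2 n))

theorem decide1_imp (hm : MCS Γ) (e : Formula Ag) (θh : {θ : Formula Ag // dd i θ ∈ Γ}) :
    Prv (impl (decide1 i Γ hm e θh).1 θh.1) := by
  unfold decide1; split
  · exact Prv.taut (t_and_left _ _)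
  · exact Prv.taut (t_and_left _ _)

theorem decide2_imp (hm : MCS Γ) (hz : ZZ Γ)
    (t : List (BoxOp Ag × Formula Ag) × BoxOp Ag × Formula Ag)
    (θh : {θ : Formula Ag // dd i θ ∈ Γ}) :
    Prv (impl (decide2 i Γ hm hz t θh).1 θh.1) := by
  unfold decide2; split
  · exact Prv.taut (t_and_left _ _)
  · exact Prv.taut (t_and_left _ _)

theorem decide1_pos (hm : MCS Γ) (e : Formula Ag) (θh : {θ : Formula Ag // dd i θ ∈ Γ})
    (h : dd i (Formula.and θh.1 e) ∈ Γ) :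
    (decide1 i Γ hm e θh).1 = Formula.and θh.1 e := by
  unfold decide1; rw [dif_pos h]

theorem decide1_neg (hm : MCS Γ) (e : Formula Ag) (θh : {θ : Formula Ag // dd i θ ∈ Γ})
    (h : dd i (Formula.and θh.1 e) ∉ Γ) :
    (decide1 i Γ hm e θh).1 = Formula.and θh.1 (Formula.neg e) := by
  unfold decide1; rw [dif_neg h]

theorem decide2_cases (hm : MCS Γ) (hz : ZZ Γ)
    (t : List (BoxOp Ag × Formula Ag) × BoxOp Ag × Formula Ag)
    (θh : {θ : Formula Ag // dd i θ ∈ Γ}) :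
    (∃ q : ℕ, (decide2 i Γ hm hz t θh).1 =
        Formula.and θh.1 (zigzag t.1 t.2.1 (Formula.and t.2.2 (Formula.nameF q)))) ∨
      (decide2 i Γ hm hz t θh).1 =
        Formula.and θh.1 (Formula.neg (zigzag t.1 t.2.1 t.2.2)) := by
  unfold decide2; split
  · exact Or.inl ⟨_, rfl⟩
  · exact Or.inr rfl

section Stage
variable (hm : MCS Γ) (hz : ZZ Γ) (h0 : dd i Formula.verum ∈ Γ)
  (e1 : ℕ → Formula Ag) (e2 : ℕ → List (BoxOp Ag × Formula Ag) × BoxOp Ag × Formula Ag)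

theorem stage_succ (n : ℕ) : stageF i Γ hm hz h0 e1 e2 (n + 1) =
    decide2 i Γ hm hz (e2 n) (decide1 i Γ hm (e1 n) (stageF i Γ hm hz h0 e1 e2 n)) := rfl

theorem stage_succ_imp (n : ℕ) :
    Prv (impl (stageF i Γ hm hz h0 e1 e2 (n + 1)).1 (stageF i Γ hm hz h0 e1 e2 n).1) :=
  imp_trans (decide2_imp i Γ hm hz (e2 n) _) (decide1_imp i Γ hm (e1 n) _)

theorem stage_mono {m n : ℕ} (h : m ≤ n) :
    Prv (impl (stageF i Γ hm hz h0 e1 e2 n).1 (stageF i Γ hm hz h0 e1 e2 m).1) := by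
  induction n with
  | zero => rw [Nat.le_zero.1 h]; exact Prv.taut (t_id _)
  | succ n ih =>
    rcases Nat.lt_or_ge m (n + 1) with hlt | hge
    · exact imp_trans (stage_succ_imp i Γ hm hz h0 e1 e2 n) (ih (Nat.lt_succ_iff.1 hlt))
    · rw [Nat.le_antisymm h hge]; exact Prv.taut (t_id _)

/-- The limit theory. -/
def Delta : Set (Formula Ag) :=
  {χ | ∃ n : ℕ, Prv (impl (stageF i Γ hm hz h0 e1 e2 n).1 χ)}

theorem delta_bigAnd {l : List (Formula Ag)} (h : ∀ χ ∈ l, χ ∈ Delta i Γ hm hz h0 e1 e2) :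
    ∃ N : ℕ, Prv (impl (stageF i Γ hm hz h0 e1 e2 N).1 (bigAnd l)) := by
  induction l with
  | nil => exact ⟨0, Prv.mp (Prv.taut (t_k _ Formula.verum)) prv_verum⟩
  | cons a l ih =>
    obtain ⟨n1, h1⟩ := h a (List.mem_cons_self (a := a) (l := l))
    obtain ⟨N2, h2⟩ := ih (fun χ hχ => h χ (List.mem_cons_of_mem a hχ))
    refine ⟨max n1 N2, ?_⟩
    have h1' := imp_trans (stage_mono i Γ hm hz h0 e1 e2 (Nat.le_max_left n1 N2)) h1
    have h2' := imp_trans (stage_mono i Γ hm hz h0 e1 e2 (Nat.le_max_right n1 N2)) h2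
    exact Prv.mp (Prv.mp (Prv.taut (t_pair a (bigAnd l) _)) h1') h2'

theorem stage_not_bot (n : ℕ)
    (h : Prv (impl (stageF i Γ hm hz h0 e1 e2 n).1 Formula.bot)) : False := by
  have h1 : Prv (Formula.neg (stageF i Γ hm hz h0 e1 e2 n).1) :=
    Prv.mp (Prv.taut (t_notof _)) h
  have h2 : Formula.obl i (Formula.neg (stageF i Γ hm hz h0 e1 e2 n).1) ∈ Γ :=
    mcs_mem_of_prv hm (nec_obl i h1)
  exact mcs_not_both hm h2 (stageF i Γ hm hz h0 e1 e2 n).2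

theorem delta_consistent : ¬ SetProv (Delta i Γ hm hz h0 e1 e2) Formula.bot := by
  intro h
  obtain ⟨l, hmem, hp⟩ := setProv_iff.1 h
  obtain ⟨N, hN⟩ := delta_bigAnd i Γ hm hz h0 e1 e2 hmem
  exact stage_not_bot i Γ hm hz h0 e1 e2 N (imp_trans hN hp)

theorem delta_not_both {χ : Formula Ag} (h1 : χ ∈ Delta i Γ hm hz h0 e1 e2)
    (h2 : Formula.neg χ ∈ Delta i Γ hm hz h0 e1 e2) : False := by
  refine delta_consistent i Γ hm hz h0 e1 e2 (setProv_mp (setProv_mp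
    (setProv_of_prv (Prv.taut (t_bot χ))) (setProv_of_mem h1)) (setProv_of_mem h2))

theorem delta_complete (he1 : Function.Surjective e1) (χ : Formula Ag) :
    χ ∈ Delta i Γ hm hz h0 e1 e2 ∨ Formula.neg χ ∈ Delta i Γ hm hz h0 e1 e2 := by
  obtain ⟨n, rfl⟩ := he1 χ
  set θh := decide1 i Γ hm (e1 n) (stageF i Γ hm hz h0 e1 e2 n) with hθh
  have hd2 : Prv (impl (stageF i Γ hm hz h0 e1 e2 (n + 1)).1 θh.1) :=
    decide2_imp i Γ hm hz (e2 n) _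
  by_cases h : dd i (Formula.and (stageF i Γ hm hz h0 e1 e2 n).1 (e1 n)) ∈ Γ
  · left
    refine ⟨n + 1, imp_trans hd2 ?_⟩
    rw [hθh, decide1_pos i Γ hm (e1 n) _ h]
    exact Prv.taut (t_and_right _ _)
  · right
    refine ⟨n + 1, imp_trans hd2 ?_⟩
    rw [hθh, decide1_neg i Γ hm (e1 n) _ h]
    exact Prv.taut (t_and_right _ _)

theorem delta_mcs (he1 : Function.Surjective e1) : MCS (Delta i Γ hm hz h0 e1 e2) := by
  refine ⟨delta_consistent i Γ hm hz h0 e1 e2, ?_⟩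
  intro Γ' hss
  obtain ⟨φ, hφ1, hφ2⟩ := Set.exists_of_ssubset hss
  have hneg : Formula.neg φ ∈ Delta i Γ hm hz h0 e1 e2 :=
    (delta_complete i Γ hm hz h0 e1 e2 he1 φ).resolve_left hφ2
  exact ⟨[φ, Formula.neg φ], by
      intro χ hχ
      rcases List.mem_cons.1 hχ with h | h
      · exact h ▸ hφ1
      · simp only [List.mem_singleton] at h
        exact h ▸ hss.1 hneg,
    Prv.taut (t_bot φ)⟩

theorem delta_canR (he1 : Function.Surjective e1) :
    canR (BoxOp.obl i) Γ (Delta i Γ hm hz h0 e1 e2) := by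
  intro φ hφ
  obtain ⟨n, rfl⟩ := he1 φ
  have hpos : dd i (Formula.and (stageF i Γ hm hz h0 e1 e2 n).1 (e1 n)) ∈ Γ :=
    L_forced i Γ hm (stageF i Γ hm hz h0 e1 e2 n).2 hφ
  have hd2 : Prv (impl (stageF i Γ hm hz h0 e1 e2 (n + 1)).1
      (decide1 i Γ hm (e1 n) (stageF i Γ hm hz h0 e1 e2 n)).1) :=
    decide2_imp i Γ hm hz (e2 n) _
  refine ⟨n + 1, imp_trans hd2 ?_⟩
  rw [decide1_pos i Γ hm (e1 n) _ hpos]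
  exact Prv.taut (t_and_right _ _)

theorem delta_zigzag (he2 : Function.Surjective e2)
    (l : List (BoxOp Ag × Formula Ag)) (α : BoxOp Ag) (φ : Formula Ag)
    (h : zigzag l α φ ∈ Delta i Γ hm hz h0 e1 e2) :
    ∃ q : ℕ, zigzag l α (Formula.and φ (Formula.nameF q)) ∈ Delta i Γ hm hz h0 e1 e2 := by
  obtain ⟨n, ht⟩ := he2 (l, α, φ)
  set θh := decide1 i Γ hm (e1 n) (stageF i Γ hm hz h0 e1 e2 n) with hθh
  have hcases := decide2_cases i Γ hm hz (e2 n) θh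
  rw [ht] at hcases
  have hstage : (stageF i Γ hm hz h0 e1 e2 (n + 1)).1 = (decide2 i Γ hm hz (e2 n) θh).1 := rfl
  rw [ht] at hstage
  rcases hcases with ⟨q, hq⟩ | hneg
  · refine ⟨q, n + 1, ?_⟩
    rw [hstage, hq]
    exact Prv.taut (t_and_right _ _)
  · exfalso
    refine delta_not_both i Γ hm hz h0 e1 e2 h ⟨n + 1, ?_⟩
    rw [hstage, hneg]
    exact Prv.taut (t_and_right _ _)

end Stage
end Construction

/-- Existence of an IRR `⊗ᵢ`-successor. -/
theorem exists_irr_obl {Ag : Type} [Fintype Ag] (i : Ag) (Γ : Set (Formula Ag))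
    (hΓ : IRRTheory Γ) : ∃ Δ : Set (Formula Ag), IRRTheory Δ ∧ canR (BoxOp.obl i) Γ Δ := by
  obtain ⟨hm, hname, hz⟩ := hΓ
  have h0 : dd i Formula.verum ∈ Γ := mcs_mem_of_prv hm (prv_dd_verum i)
  haveI : Nonempty (Formula Ag) := ⟨Formula.verum⟩
  haveI : Nonempty (List (BoxOp Ag × Formula Ag) × BoxOp Ag × Formula Ag) :=
    ⟨([], BoxOp.box, Formula.verum)⟩
  obtain ⟨e1, he1⟩ := exists_surjective_nat (Formula Ag)
  obtain ⟨e2, he2⟩ :=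
    exists_surjective_nat (List (BoxOp Ag × Formula Ag) × BoxOp Ag × Formula Ag)
  refine ⟨Delta i Γ hm hz h0 e1 e2, ⟨delta_mcs i Γ hm hz h0 e1 e2 he1, ?_,
    delta_zigzag i Γ hm hz h0 e1 e2 he2⟩, delta_canR i Γ hm hz h0 e1 e2 he1⟩
  obtain ⟨p, hp⟩ := hname
  have hbox : Formula.box (Formula.nameF p) ∈ Γ := mcs_mp_prv hm (name_box p) hp
  have hobl : Formula.obl i (Formula.nameF p) ∈ Γ :=
    mcs_mp_prv hm (imp_trans (Prv.a13 i (Formula.nameF p))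
      (Prv.taut (t_and_right _ _))) hbox
  exact ⟨p, delta_canR i Γ hm hz h0 e1 e2 he1 (Formula.nameF p) hobl⟩

end TDSAux
/-- **Ought-implies-can (D9) for the restricted canonical model**: for every
agent `i` and IRR-theory Γ there is an IRR-theory Δ with `R^dt_□ Γ Δ` such that
every IRR-theory Σ with `R^dt_[i] Δ Σ` satisfies `R^dt_⊗i Γ Σ`. -/
theorem canonical_D9 {Ag : Type} [Fintype Ag] [Nonempty Ag]
    (i : Ag) (Γ : Set (Formula Ag)) (hΓ : IRRTheory Γ) :
    ∃ Δ : Set (Formula Ag), IRRTheory Δ ∧ canR BoxOp.box Γ Δ ∧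
      ∀ S : Set (Formula Ag), IRRTheory S →
        canR (BoxOp.agent i) Δ S → canR (BoxOp.obl i) Γ S := by

  obtain ⟨Δ, hΔ, hcan⟩ := TDSAux.exists_irr_obl i Γ hΓ
  have hm := hΓ.1
  refine ⟨Δ, hΔ, ?_, ?_⟩
  · intro φ hφ
    exact hcan φ (TDSAux.mcs_mp_prv hm (TDSAux.imp_trans (Prv.a13 i φ)
      (Prv.taut (TDSAux.t_and_right _ _))) hφ)
  · intro S _ hag ξ hξ
    have h1 : Formula.obl i (Formula.agent i ξ) ∈ Γ :=
      TDSAux.mcs_mp_prv hm (TDSAux.obl_to_obl_agent i ξ) hξ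
    exact hag ξ (hcan _ h1)
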